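/- Every complete simple game with exactly one shift-minimal winning coalition type (r = 1), with no null players and no veto players, and with t ≥ 3 equivalence classes of voters is not 2-invariant trade robust: writing the unique shift-minimal winning type as m = (m_1,...,m_t) with 1 ≤ m_i ≤ n_i - 1 for all i, the types a = (m_1-1, m_2+1, m_3+1, m_4,...,m_t) and b = (m_1+1, m_2-1, m_3-1, m_4,...,m_t) are losing, and ⟨m, m; a, b⟩ is a 2-trade (a + b = m + m componentwise). -/
import Mathlib


/-- A complete simple game with a unique shift-minimal winning coalition type,
no nulls, no vetoers, and `t ≥ 3` equivalence classes is not `2`-invariant trade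
robust: the explicit types `a` and `b` are losing and `a + b = m + m`. -/
theorem stmt11 (t : ℕ) (ht : 3 ≤ t) (n m : Fin t → ℕ)
    (hm : ∀ i, 1 ≤ m i ∧ m i ≤ n i - 1) :
    let a : Fin t → ℕ := fun i =>
      if (i : ℕ) = 0 then m i - 1 else
      if (i : ℕ) = 1 then m i + 1 else
      if (i : ℕ) = 2 then m i + 1 else m i
    let b : Fin t → ℕ := fun i =>
      if (i : ℕ) = 0 then m i + 1 else
      if (i : ℕ) = 1 then m i - 1 else
      if (i : ℕ) = 2 then m i - 1 else m i
    let Win : (Fin t → ℕ) → Prop := fun s => ∀ k : Fin t,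
      (∑ i ∈ Finset.univ.filter (· ≤ k), m i) ≤
        ∑ i ∈ Finset.univ.filter (· ≤ k), s i
    (∀ i, a i ≤ n i) ∧ (∀ i, b i ≤ n i) ∧ ¬ Win a ∧ ¬ Win b ∧
      (∀ i, a i + b i = m i + m i) := by
  intro a b Win
  have k0 : Fin t := ⟨0, by omega⟩
  set i0 : Fin t := ⟨0, by omega⟩ with hi0
  set i1 : Fin t := ⟨1, by omega⟩ with hi1
  set i2 : Fin t := ⟨2, by omega⟩ with hi2
  have h0 := hm i0
  have h1 := hm i1
  have h2 := hm i2
  refine ⟨?_, ?_, ?_, ?_, ?_⟩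
  · intro i
    have := hm i
    simp only [a]
    split_ifs <;> omega
  · intro i
    have := hm i
    simp only [b]
    split_ifs <;> omega
  · intro hw
    have hf : Finset.univ.filter (· ≤ i0) = {i0} := by
      ext i
      simp [Fin.le_def, Fin.ext_iff, Nat.le_zero, hi0]
    have := hw i0
    rw [hf, Finset.sum_singleton, Finset.sum_singleton] at this
    have ha0 : a i0 = m i0 - 1 := by simp [a, hi0]
    omega
  · intro hw
    have hf : Finset.univ.filter (· ≤ i2) = {i0, i1, i2} := by
      ext i
      simp only [Finset.mem_filter, Finset.mem_univ, true_and, Finset.mem_insert,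
        Finset.mem_singleton, Fin.le_def, Fin.ext_iff, hi0, hi1, hi2]
      omega
    have hd01 : i0 ≠ i1 := by simp [Fin.ext_iff, hi0, hi1]
    have hd02 : i0 ≠ i2 := by simp [Fin.ext_iff, hi0, hi2]
    have hd12 : i1 ≠ i2 := by simp [Fin.ext_iff, hi1, hi2]
    have := hw i2
    rw [hf] at this
    rw [Finset.sum_insert (by simp [hd01, hd02]), Finset.sum_insert (by simp [hd12]),
      Finset.sum_singleton, Finset.sum_insert (by simp [hd01, hd02]),
      Finset.sum_insert (by simp [hd12]), Finset.sum_singleton] at this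
    have hb0 : b i0 = m i0 + 1 := by simp [b, hi0]
    have hb1 : b i1 = m i1 - 1 := by simp [b, hi1]
    have hb2 : b i2 = m i2 - 1 := by simp [b, hi2]
    omega
  · intro i
    have := hm i
    simp only [a, b]
    split_ifs <;> omega
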